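/- For natural numbers t and k with k ≥ 1, the number of natural numbers n < 2^t satisfying d(α(n)) = k equals the sum Σ_{i=k}^{t−1} binomial(i, k). -/

import Mathlib

/-- Binary digit sum: the sum of the digits of `n` in base 2. -/
def binaryDigitSum (n : ℕ) : ℕ := (Nat.digits 2 n).sum

/-- `α(n) = (CF₂(n+1) − 1)/2` where `CF₂(m) = m / 2^{ν₂(m)}` is the odd cofactor. -/
def alphaFn (n : ℕ) : ℕ := ((n + 1) / 2 ^ padicValNat 2 (n + 1) - 1) / 2

lemma dsum_step (n : ℕ) (hn : 0 < n) :
    binaryDigitSum n = n % 2 + binaryDigitSum (n / 2) := by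
  unfold binaryDigitSum
  rw [Nat.digits_def' (by norm_num) hn]
  simp

lemma dsum_pow_add (t : ℕ) : ∀ r < 2 ^ t, binaryDigitSum (2 ^ t + r) = binaryDigitSum r + 1 := by
  induction t with
  | zero =>
    intro r hr
    interval_cases r
    simp [binaryDigitSum]
  | succ t ih =>
    intro r hr
    have h1 : 0 < 2 ^ (t + 1) + r := by positivity
    rw [dsum_step _ h1]
    have h2 : (2 ^ (t + 1) + r) % 2 = r % 2 := by
      omega
    have h3 : (2 ^ (t + 1) + r) / 2 = 2 ^ t + r / 2 := by
      omega
    have h4 : r / 2 < 2 ^ t := by omega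
    rw [h2, h3, ih _ h4]
    rcases Nat.eq_zero_or_pos r with h | h
    · simp [h, binaryDigitSum]
    · rw [dsum_step r h]; ring

lemma count_pop (t : ℕ) : ∀ s : ℕ,
    ((Finset.range (2 ^ t)).filter (fun m => binaryDigitSum m = s)).card = t.choose s := by
  induction t with
  | zero =>
    intro s
    have : Finset.range (2 ^ 0) = {0} := by decide
    rw [this]
    rcases Nat.eq_zero_or_pos s with h | h
    · subst h; rw [Finset.filter_singleton, if_pos (by simp [binaryDigitSum])]; simp
    · rw [Nat.choose_eq_zero_of_lt h]
      simp only [Finset.filter_singleton]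
      have : ¬ binaryDigitSum 0 = s := by simp [binaryDigitSum]; omega
      simp [this]
  | succ t ih =>
    intro s
    have hsplit : Finset.range (2 ^ (t + 1)) =
        Finset.range (2 ^ t) ∪ (Finset.range (2 ^ t)).image (fun r => 2 ^ t + r) := by
      ext m
      simp only [Finset.mem_union, Finset.mem_range, Finset.mem_image]
      constructor
      · intro hm
        rcases Nat.lt_or_ge m (2 ^ t) with h | h
        · exact Or.inl h
        · right
          exact ⟨m - 2 ^ t, by rw [pow_succ] at hm; omega, by omega⟩
      · rintro (h | ⟨r, hr, rfl⟩) <;> rw [pow_succ] <;> omega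
    have hdisj : Disjoint ((Finset.range (2 ^ t)).filter (fun m => binaryDigitSum m = s))
        (((Finset.range (2 ^ t)).image (fun r => 2 ^ t + r)).filter (fun m => binaryDigitSum m = s)) := by
      rw [Finset.disjoint_left]
      intro a ha hb
      simp only [Finset.mem_filter, Finset.mem_range, Finset.mem_image] at ha hb
      obtain ⟨⟨r, hr, rfl⟩, _⟩ := hb
      omega
    rw [hsplit, Finset.filter_union, Finset.card_union_of_disjoint hdisj, ih]
    have hinj : Set.InjOn (fun r => 2 ^ t + r) (Finset.range (2 ^ t)) := by
      intro a _ b _ h; simpa using h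
    have himg : ((Finset.range (2 ^ t)).image (fun r => 2 ^ t + r)).filter
          (fun m => binaryDigitSum m = s)
        = ((Finset.range (2 ^ t)).filter (fun r => binaryDigitSum r + 1 = s)).image
          (fun r => 2 ^ t + r) := by
      ext m
      simp only [Finset.mem_filter, Finset.mem_image, Finset.mem_range]
      constructor
      · rintro ⟨⟨r, hr, rfl⟩, h⟩
        exact ⟨r, ⟨hr, by rw [dsum_pow_add t r hr] at h; exact h⟩, rfl⟩
      · rintro ⟨r, ⟨hr, h⟩, rfl⟩
        exact ⟨⟨r, hr, rfl⟩, by rw [dsum_pow_add t r hr]; exact h⟩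
    rw [himg, Finset.card_image_of_injOn (by intro a _ b _ h; simpa using h)]
    rcases Nat.eq_zero_or_pos s with h | h
    · subst h
      have : (Finset.range (2 ^ t)).filter (fun r => binaryDigitSum r + 1 = 0) = ∅ := by
        apply Finset.filter_false_of_mem; intro x _; omega
      simp [this]
    · obtain ⟨s', rfl⟩ := Nat.exists_eq_add_of_le h
      have heq : (Finset.range (2 ^ t)).filter (fun r => binaryDigitSum r + 1 = 1 + s')
          = (Finset.range (2 ^ t)).filter (fun r => binaryDigitSum r = s') := by
        ext x; simp only [Finset.mem_filter, Finset.mem_range]; omega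
      rw [heq, ih]
      rw [show (1 : ℕ) + s' = s' + 1 by omega, Nat.choose_succ_succ' t s']
      omega

lemma dsum_two_mul (x : ℕ) (hx : 0 < x) : binaryDigitSum (2 * x) = binaryDigitSum x := by
  rw [dsum_step (2 * x) (by omega)]
  simp [Nat.mul_div_cancel_left x (by norm_num : 0 < 2)]

lemma dsum_pow_mul (v : ℕ) : ∀ c, 0 < c → binaryDigitSum (2 ^ v * c) = binaryDigitSum c := by
  induction v with
  | zero => intro c _; simp
  | succ v ih =>
    intro c hc
    have : 2 ^ (v + 1) * c = 2 ^ v * (2 * c) := by ring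
    rw [this, ih (2 * c) (by omega), dsum_two_mul c hc]

lemma key (n : ℕ) : binaryDigitSum (alphaFn n) + 1 = binaryDigitSum (n + 1) := by
  have hfac : (n + 1).factorization 2 = padicValNat 2 (n + 1) :=
    Nat.factorization_def (n + 1) Nat.prime_two
  set v := padicValNat 2 (n + 1) with hv
  set c := (n + 1) / 2 ^ v with hc
  have hmul : 2 ^ v * c = n + 1 := by
    have h := Nat.ordProj_mul_ordCompl_eq_self (n + 1) 2
    rw [hfac] at h
    exact h
  have hcpos : 0 < c := by
    have h := Nat.ordCompl_pos 2 (show n + 1 ≠ 0 by omega)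
    rw [hfac] at h
    exact h
  have hodd : ¬ 2 ∣ c := by
    have h := Nat.not_dvd_ordCompl Nat.prime_two (show n + 1 ≠ 0 by omega)
    rw [hfac] at h
    exact h
  have hmod : c % 2 = 1 := by omega
  have hca : c = 2 * ((c - 1) / 2) + 1 := by omega
  have halpha : alphaFn n = (c - 1) / 2 := rfl
  rw [halpha, ← hmul, dsum_pow_mul v c hcpos]
  rw [dsum_step c hcpos, hmod]
  have : c / 2 = (c - 1) / 2 := by omega
  rw [this]; ring

/-- `#{n < 2^t : d(α(n)) = k} = Σ_{i=k}^{t−1} C(i, k)`. -/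
theorem card_dAlpha_eq_sum (t k : ℕ) (hk : 1 ≤ k) :
    {n : ℕ | n < 2 ^ t ∧ binaryDigitSum (alphaFn n) = k}.ncard
      = ∑ i ∈ Finset.Icc k (t - 1), i.choose k := by
  have hset : {n : ℕ | n < 2 ^ t ∧ binaryDigitSum (alphaFn n) = k}
      = ↑((Finset.range (2 ^ t)).filter (fun n => binaryDigitSum (alphaFn n) = k)) := by
    ext n; simp [Set.mem_setOf_eq]
  rw [hset, Set.ncard_coe_finset]
  rcases Nat.eq_zero_or_pos t with rfl | ht
  · have h1 : Finset.range (2 ^ 0) = {0} := by decide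
    rw [h1]
    have h0 : alphaFn 0 = 0 := by simp [alphaFn, padicValNat.one]
    have : ¬ binaryDigitSum (alphaFn 0) = k := by
      rw [h0]; simp [binaryDigitSum]; omega
    rw [Finset.filter_singleton, if_neg this]
    have : Finset.Icc k 0 = ∅ := by
      rw [Finset.Icc_eq_empty_iff]; omega
    simp [this]
  · -- bijection n ↦ n + 1
    have hcard : ((Finset.range (2 ^ t)).filter (fun n => binaryDigitSum (alphaFn n) = k)).card
        = ((Finset.range (2 ^ t)).filter (fun m => binaryDigitSum m = k + 1)).card := by
      apply Finset.card_bij (fun n _ => n + 1)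
      · intro n hn
        simp only [Finset.mem_filter, Finset.mem_range] at hn ⊢
        have hd : binaryDigitSum (n + 1) = k + 1 := by
          rw [← key n, hn.2]
        refine ⟨?_, hd⟩
        rcases Nat.lt_or_ge (n + 1) (2 ^ t) with h | h
        · exact h
        · exfalso
          have : n + 1 = 2 ^ t := by omega
          rw [this] at hd
          have h2 := dsum_pow_add t 0 (by positivity)
          rw [Nat.add_zero, show binaryDigitSum 0 = 0 by simp [binaryDigitSum]] at h2
          omega
      · intro a _ b _ h; omega
      · intro m hm
        simp only [Finset.mem_filter, Finset.mem_range] at hm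
        have hm0 : m ≠ 0 := by
          intro h; rw [h] at hm
          simp [binaryDigitSum] at hm
        refine ⟨m - 1, ?_, by omega⟩
        simp only [Finset.mem_filter, Finset.mem_range]
        constructor
        · omega
        · have : m - 1 + 1 = m := by omega
          have hkey := key (m - 1)
          rw [this, hm.2] at hkey
          omega
    rw [hcard, count_pop t (k + 1), Nat.sum_Icc_choose]
    congr 1
    omega
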